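/- The spaces c₀ and c₀₀ contain no nonzero right-symmetric points, while the right-symmetric points of c are exactly the sequences x with |x_n| = ‖x‖ for all n. -/

import Mathlib

open ENNReal Filter

set_option maxHeartbeats 1000000

/-- The space `c₀` of sequences converging to `0`, as a subspace of `ℓ∞`. -/
def czero (𝕂 : Type*) [RCLike 𝕂] : Submodule 𝕂 (lp (fun _ : ℕ => 𝕂) ∞) where
  carrier := {x | Tendsto (fun n => x n) atTop (nhds 0)}
  zero_mem' := by
    simpa [lp.coeFn_zero] using (tendsto_const_nhds : Tendsto (fun _ : ℕ => (0 : 𝕂)) atTop _)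
  add_mem' := by
    intro a b ha hb
    have h := (Set.mem_setOf_eq ▸ ha).add (Set.mem_setOf_eq ▸ hb)
    simpa [lp.coeFn_add, Set.mem_setOf_eq] using h
  smul_mem' := by
    intro c a ha
    have h := (Set.mem_setOf_eq ▸ ha).const_mul c
    simpa [lp.coeFn_smul, Set.mem_setOf_eq, smul_eq_mul] using h

/-- The space `c` of convergent sequences, as a subspace of `ℓ∞`. -/
def cconv (𝕂 : Type*) [RCLike 𝕂] : Submodule 𝕂 (lp (fun _ : ℕ => 𝕂) ∞) where
  carrier := {x | ∃ l : 𝕂, Tendsto (fun n => x n) atTop (nhds l)}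
  zero_mem' :=
    ⟨0, by simpa [lp.coeFn_zero] using
      (tendsto_const_nhds : Tendsto (fun _ : ℕ => (0 : 𝕂)) atTop _)⟩
  add_mem' := by
    rintro a b ⟨la, ha⟩ ⟨lb, hb⟩
    exact ⟨la + lb, by simpa [lp.coeFn_add] using ha.add hb⟩
  smul_mem' := by
    rintro c a ⟨la, ha⟩
    exact ⟨c * la, by simpa [lp.coeFn_smul, smul_eq_mul] using ha.const_mul c⟩

/-- The space `c₀₀` of eventually zero sequences, as a subspace of `ℓ∞`. -/
def cfin (𝕂 : Type*) [RCLike 𝕂] : Submodule 𝕂 (lp (fun _ : ℕ => 𝕂) ∞) where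
  carrier := {x | ∀ᶠ n in atTop, x n = 0}
  zero_mem' := by
    filter_upwards with n
    simp [lp.coeFn_zero]
  add_mem' := by
    intro a b ha hb
    have ha' : ∀ᶠ n in atTop, a n = 0 := ha
    have hb' : ∀ᶠ n in atTop, b n = 0 := hb
    filter_upwards [ha', hb'] with n h1 h2
    simp [lp.coeFn_add, h1, h2]
  smul_mem' := by
    intro c a ha
    have ha' : ∀ᶠ n in atTop, a n = 0 := ha
    filter_upwards [ha'] with n h1
    simp [lp.coeFn_smul, h1]

/-- Birkhoff-James orthogonality. -/
def BJOrth {𝕂 : Type*} [RCLike 𝕂] {X : Type*} [NormedAddCommGroup X] [NormedSpace 𝕂 X]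
    (x y : X) : Prop := ∀ lam : 𝕂, ‖x‖ ≤ ‖x + lam • y‖

/-- Right-symmetric point. -/
def RightSym {𝕂 : Type*} [RCLike 𝕂] {X : Type*} [NormedAddCommGroup X] [NormedSpace 𝕂 X]
    (x : X) : Prop := ∀ y : X, BJOrth (𝕂 := 𝕂) y x → BJOrth (𝕂 := 𝕂) x y


open RCLike ComplexConjugate

section Aux
variable {𝕂 : Type*} [RCLike 𝕂]

lemma apply_add (f g : lp (fun _ : ℕ => 𝕂) ∞) (n : ℕ) : (f + g) n = f n + g n := by
  simp [lp.coeFn_add]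

lemma apply_smul (c : 𝕂) (f : lp (fun _ : ℕ => 𝕂) ∞) (n : ℕ) : (c • f) n = c * f n := by
  simp [lp.coeFn_smul]

set_option maxHeartbeats 1000000 in
lemma flat_rightSym (x y : lp (fun _ : ℕ => 𝕂) ∞) (hx : ∀ n, ‖x n‖ = ‖x‖)
    (h : BJOrth (𝕂 := 𝕂) y x) : BJOrth (𝕂 := 𝕂) x y := by
  intro lam
  by_contra hc
  push_neg at hc
  set M := ‖x‖ with hMdef
  have hM : 0 < M := lt_of_le_of_lt (norm_nonneg _) hc
  have hy0 : y ≠ 0 := by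
    rintro rfl
    simp only [smul_zero, add_zero] at hc
    exact lt_irrefl _ hc
  have hlam : lam ≠ 0 := by
    rintro rfl
    simp only [zero_smul, add_zero] at hc
    exact lt_irrefl _ hc
  set δ : ℝ := M - ‖x + lam • y‖ with hδdef
  have hδ : 0 < δ := sub_pos.mpr hc
  have hδM : δ ≤ M := by
    have := norm_nonneg (x + lam • y)
    simp only [hδdef]; linarith
  -- coordinatewise re estimate
  have key : ∀ n, re (conj (x n) * (lam * y n)) ≤ -(M * δ) / 2 := by
    intro n
    have h1 : ‖x n + lam * y n‖ ≤ M - δ := by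
      have := lp.norm_apply_le_norm ENNReal.top_ne_zero (x + lam • y) n
      rw [apply_add, apply_smul] at this
      simp only [hδdef]
      linarith
    have h2 : ‖x n + lam * y n‖ ^ 2 ≤ (M - δ) ^ 2 := by
      have h0 : (0:ℝ) ≤ M - δ := by linarith
      nlinarith [norm_nonneg (x n + lam * y n)]
    have h3 : ‖x n + lam * y n‖ ^ 2
        = ‖x n‖ ^ 2 + 2 * re (conj (x n) * (lam * y n)) + ‖lam * y n‖ ^ 2 := by
      have := norm_add_sq (𝕜 := 𝕂) (x n) (lam * y n)
      simp [RCLike.inner_apply] at this ⊢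
      linear_combination this
    rw [h3, hx n] at h2
    nlinarith [sq_nonneg ‖lam * y n‖]
  set t : ℝ := δ / (2 * ‖lam‖ ^ 2 * M) with htdef
  have hlamn : 0 < ‖lam‖ := norm_pos_iff.mpr hlam
  have ht : 0 < t := by positivity
  set μ : 𝕂 := (t : 𝕂) * conj lam with hμdef
  set K : ℝ := ‖y‖ ^ 2 - t * M * δ / 2 with hKdef
  have hcoord : ∀ n, ‖y n + μ * x n‖ ^ 2 ≤ K := by
    intro n
    have h3 : ‖y n + μ * x n‖ ^ 2
        = ‖y n‖ ^ 2 + 2 * re (conj (y n) * (μ * x n)) + ‖μ * x n‖ ^ 2 := by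
      have := norm_add_sq (𝕜 := 𝕂) (y n) (μ * x n)
      simp [RCLike.inner_apply] at this ⊢
      linear_combination this
    have h4 : conj (y n) * (μ * x n) = (t : 𝕂) * conj (conj (x n) * (lam * y n)) := by
      simp only [hμdef, map_mul, RCLike.conj_conj]
      ring
    have h5 : re (conj (y n) * (μ * x n)) = t * re (conj (x n) * (lam * y n)) := by
      rw [h4, re_ofReal_mul, conj_re]
    have h6 : ‖μ * x n‖ ^ 2 = t ^ 2 * ‖lam‖ ^ 2 * M ^ 2 := by
      rw [norm_mul, hμdef, norm_mul, hx n]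
      simp [norm_conj, abs_of_pos ht]
      ring
    have h7 : t ^ 2 * ‖lam‖ ^ 2 * M ^ 2 = t * M * δ / 2 := by
      rw [htdef]; field_simp
    have h8 := key n
    have h9 : ‖y n‖ ≤ ‖y‖ := lp.norm_apply_le_norm ENNReal.top_ne_zero y n
    rw [h3, h5, h6, h7, hKdef]
    nlinarith [norm_nonneg (y n), norm_nonneg y]
  have hKlt : K < ‖y‖ ^ 2 := by
    have : 0 < t * M * δ / 2 := by positivity
    simp only [hKdef]; linarith
  have hnorm : ‖y + μ • x‖ ≤ Real.sqrt K := by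
    apply lp.norm_le_of_forall_le (Real.sqrt_nonneg K)
    intro n
    rw [apply_add, apply_smul]
    have := hcoord n
    have h0 := norm_nonneg (y n + μ * x n)
    have hK0 : 0 ≤ K := le_trans (sq_nonneg _) (hcoord 0)
    exact (Real.le_sqrt h0 hK0).mpr this
  have hylt : Real.sqrt K < ‖y‖ := by
    rw [Real.sqrt_lt' (norm_pos_iff.mpr hy0)]
    exact hKlt
  exact absurd (h μ) (by linarith [lt_of_le_of_lt hnorm hylt])

set_option maxHeartbeats 1000000 in
lemma not_rightSym_aux (x : lp (fun _ : ℕ => 𝕂) ∞) (n₀ : ℕ) (ha : ‖x n₀‖ < ‖x‖) :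
    ∃ c d : 𝕂, BJOrth (𝕂 := 𝕂) (d • x + lp.single ∞ n₀ c) x ∧
      ¬ BJOrth (𝕂 := 𝕂) x (d • x + lp.single ∞ n₀ c) := by
  set M : ℝ := ‖x‖ with hMdef
  set a : ℝ := ‖x n₀‖ with hadef
  have ha0 : 0 ≤ a := norm_nonneg _
  have hM : 0 < M := lt_of_le_of_lt ha0 ha
  set u : 𝕂 := if x n₀ = 0 then 1 else ((a : ℝ) : 𝕂)⁻¹ * x n₀ with hudef
  have hu : ‖u‖ = 1 := by
    rw [hudef]
    split_ifs with h
    · simp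
    · have ha' : a ≠ 0 := by simpa [hadef] using h
      rw [norm_mul, norm_inv, RCLike.norm_ofReal, abs_of_nonneg ha0, ← hadef]
      field_simp
  have hxn₀ : x n₀ = ((a : ℝ) : 𝕂) * u := by
    rw [hudef]
    split_ifs with h
    · simp [h, hadef]
    · have ha' : ((a:ℝ):𝕂) ≠ 0 := by
        simp [hadef, h]
      field_simp
  set d : 𝕂 := ((-M⁻¹ : ℝ) : 𝕂) with hddef
  set c : 𝕂 := u - d * x n₀ with hcdef
  set y : lp (fun _ : ℕ => 𝕂) ∞ := d • x + lp.single ∞ n₀ c with hydef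
  have hdnorm : ‖d‖ = M⁻¹ := by
    rw [hddef, RCLike.norm_ofReal, abs_neg, abs_of_nonneg (by positivity)]
  have hyn₀ : y n₀ = u := by
    rw [hydef, apply_add, apply_smul, lp.single_apply_self, hcdef]
    ring
  have hyne : ∀ n, n ≠ n₀ → y n = d * x n := by
    intro n hn
    rw [hydef, apply_add, apply_smul, lp.single_apply_ne _ _ _ hn, add_zero]
  have hcoordle : ∀ n, ‖y n‖ ≤ 1 := by
    intro n
    rcases eq_or_ne n n₀ with rfl | hn
    · rw [hyn₀, hu]
    · rw [hyne n hn, norm_mul, hdnorm]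
      have := lp.norm_apply_le_norm ENNReal.top_ne_zero x n
      rw [← hMdef] at this
      calc M⁻¹ * ‖x n‖ ≤ M⁻¹ * M := by
            apply mul_le_mul_of_nonneg_left this (by positivity)
        _ = 1 := by field_simp
  have hynorm : ‖y‖ = 1 := by
    apply le_antisymm
    · exact lp.norm_le_of_forall_le zero_le_one hcoordle
    · have := lp.norm_apply_le_norm ENNReal.top_ne_zero y n₀
      rw [hyn₀, hu] at this
      exact this
  -- sup over n ≠ n₀ equals M
  have hsup : ∀ ε : ℝ, 0 < ε → ∃ n, n ≠ n₀ ∧ M - ε < ‖x n‖ := by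
    intro ε hε
    set ε' : ℝ := min ε (M - a) with hε'def
    have hε' : 0 < ε' := lt_min hε (by linarith)
    have hlt : M - ε' < ⨆ n, ‖x n‖ := by
      rw [← lp.norm_eq_ciSup, ← hMdef]
      linarith
    obtain ⟨n, hn⟩ := exists_lt_of_lt_ciSup hlt
    refine ⟨n, ?_, ?_⟩
    · rintro rfl
      have : M - ε' ≥ a := by
        have : ε' ≤ M - a := min_le_right _ _
        linarith
      rw [← hadef] at hn
      linarith
    · have : ε' ≤ ε := min_le_left _ _
      linarith
  refine ⟨c, d, ?_, ?_⟩
  · -- BJOrth y x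
    intro μ
    rw [← hydef, hynorm]
    rcases le_or_gt 0 (re μ) with hs | hs
    · -- use coordinate n₀
      have hco : (y + μ • x) n₀ = u * (1 + μ * ((a:ℝ):𝕂)) := by
        rw [apply_add, apply_smul, hyn₀, hxn₀]
        ring
      have h1 : (1 : ℝ) ≤ ‖(y + μ • x) n₀‖ := by
        rw [hco, norm_mul, hu, one_mul]
        have := re_le_norm (1 + μ * ((a:ℝ):𝕂))
        have hre : re (1 + μ * ((a:ℝ):𝕂)) = 1 + re μ * a := by
          simp [RCLike.mul_re]
        rw [hre] at this
        nlinarith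
      exact le_trans h1 (lp.norm_apply_le_norm ENNReal.top_ne_zero _ n₀)
    · -- use tail coordinates
      set β : ℝ := ‖μ + d‖ with hβdef
      have hβlb : M⁻¹ - re μ ≤ β := by
        have h1 := re_le_norm (-(μ + d))
        rw [norm_neg, ← hβdef] at h1
        have h2 : re (-(μ + d)) = -re μ + M⁻¹ := by
          rw [map_neg, map_add, hddef, RCLike.ofReal_re]
          ring
        rw [h2] at h1
        linarith
      have hβpos : 0 < β :=
        lt_of_lt_of_le (by linarith [inv_pos.mpr hM] : (0:ℝ) < M⁻¹ - re μ) hβlb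
      have htail : ∀ n, n ≠ n₀ → (y + μ • x) n = (μ + d) * x n := by
        intro n hn
        rw [apply_add, apply_smul, hyne n hn]
        ring
      have hge : β * M ≤ ‖y + μ • x‖ := by
        by_contra hcon
        push_neg at hcon
        set ε : ℝ := (β * M - ‖y + μ • x‖) / β with hεdef
        have hεpos : 0 < ε := by
          apply div_pos _ hβpos
          linarith
        obtain ⟨n, hn, hxn⟩ := hsup ε hεpos
        have h1 : β * ‖x n‖ ≤ ‖y + μ • x‖ := by
          have := lp.norm_apply_le_norm ENNReal.top_ne_zero (y + μ • x) n
          rw [htail n hn, norm_mul, ← hβdef] at this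
          exact this
        have h2 : β * (M - ε) < β * ‖x n‖ := by
          exact mul_lt_mul_of_pos_left hxn hβpos
        have h3 : β * (M - ε) = ‖y + μ • x‖ := by
          have hβ0 : β ≠ 0 := ne_of_gt hβpos
          rw [hεdef, mul_sub, mul_div_cancel₀ _ hβ0]
          ring
        linarith
      have : 1 < β * M := by
        have h1 : M⁻¹ < β := by
          have : 0 < -re μ := by linarith
          linarith [hβlb]
        calc (1:ℝ) = M⁻¹ * M := by field_simp
          _ < β * M := by exact mul_lt_mul_of_pos_right h1 hM
      linarith
  · -- ¬ BJOrth x y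
    intro hB
    set t : ℝ := (M - a) / 2 with htdef
    have ht : 0 < t := by rw [htdef]; linarith
    have htM : t < M := by rw [htdef]; linarith
    have := hB ((t : ℝ) : 𝕂)
    rw [← hydef, ← hMdef] at this
    have hle : ‖x + ((t:ℝ):𝕂) • y‖ ≤ (M + a) / 2 := by
      apply lp.norm_le_of_forall_le (by linarith)
      intro n
      rcases eq_or_ne n n₀ with h | hn
      · rw [h]
        have hco : (x + ((t:ℝ):𝕂) • y) n₀ = (((a + t : ℝ)) : 𝕂) * u := by
          rw [apply_add, apply_smul, hyn₀, hxn₀, RCLike.ofReal_add]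
          ring
        rw [hco, norm_mul, hu, mul_one, RCLike.norm_ofReal, abs_of_pos (by linarith)]
        rw [htdef]; linarith
      · have hco : (x + ((t:ℝ):𝕂) • y) n = (((1 - t * M⁻¹ : ℝ)) : 𝕂) * x n := by
          rw [apply_add, apply_smul, hyne n hn, hddef]
          push_cast
          ring
        rw [hco, norm_mul, RCLike.norm_ofReal]
        have h1 : 0 ≤ 1 - t * M⁻¹ := by
          have : t * M⁻¹ < 1 := by
            rw [← div_eq_mul_inv]
            exact (div_lt_one hM).mpr htM
          linarith
        rw [abs_of_nonneg h1]
        have h2 : ‖x n‖ ≤ M := by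
          have := lp.norm_apply_le_norm ENNReal.top_ne_zero x n
          rw [← hMdef] at this; exact this
        calc (1 - t * M⁻¹) * ‖x n‖ ≤ (1 - t * M⁻¹) * M :=
              mul_le_mul_of_nonneg_left h2 h1
          _ = M - t := by field_simp
          _ = (M + a) / 2 := by rw [htdef]; ring
    have : M ≤ (M + a) / 2 := le_trans this hle
    linarith


lemma single_mem_cfin (n₀ : ℕ) (c : 𝕂) : lp.single ∞ n₀ c ∈ cfin 𝕂 := by
  show ∀ᶠ n in atTop, (lp.single ∞ n₀ c : lp (fun _ : ℕ => 𝕂) ∞) n = 0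
  filter_upwards [eventually_ne_atTop n₀] with n hn
  exact lp.single_apply_ne (E := fun _ : ℕ => 𝕂) ∞ n₀ c hn

lemma cfin_le_czero : cfin 𝕂 ≤ czero 𝕂 := by
  intro x hx
  have hx' : ∀ᶠ n in atTop, x n = 0 := hx
  show Tendsto (fun n => x n) atTop (nhds 0)
  refine Tendsto.congr' ?_ tendsto_const_nhds
  filter_upwards [hx'] with n h using h.symm

lemma czero_le_cconv : czero 𝕂 ≤ cconv 𝕂 := fun x hx => ⟨0, hx⟩

lemma bj_coe {S : Submodule 𝕂 (lp (fun _ : ℕ => 𝕂) ∞)} (a b : S) :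
    BJOrth (𝕂 := 𝕂) a b ↔
      BJOrth (𝕂 := 𝕂) (a : lp (fun _ : ℕ => 𝕂) ∞) (b : lp (fun _ : ℕ => 𝕂) ∞) := by
  unfold BJOrth
  simp only [Submodule.coe_norm, Submodule.coe_add, Submodule.coe_smul]

lemma not_rightSym_sub {S : Submodule 𝕂 (lp (fun _ : ℕ => 𝕂) ∞)}
    (hS : cfin 𝕂 ≤ S) (x : S) (n₀ : ℕ)
    (ha : ‖(x : lp (fun _ : ℕ => 𝕂) ∞) n₀‖ < ‖x‖) : ¬ RightSym (𝕂 := 𝕂) x := by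
  intro hsym
  rw [Submodule.coe_norm] at ha
  obtain ⟨c, d, h1, h2⟩ := not_rightSym_aux (x : lp (fun _ : ℕ => 𝕂) ∞) n₀ ha
  have hmem : d • (x : lp (fun _ : ℕ => 𝕂) ∞) + lp.single ∞ n₀ c ∈ S :=
    S.add_mem (S.smul_mem d x.2) (hS (single_mem_cfin n₀ c))
  have hb1 : BJOrth (𝕂 := 𝕂) (⟨_, hmem⟩ : S) x := by
    intro lam
    have h := h1 lam
    simp only [BJOrth, Submodule.coe_norm, Submodule.coe_add, Submodule.coe_smul]
    exact h
  have h3 := hsym ⟨_, hmem⟩ hb1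
  apply h2
  intro lam
  have h := h3 lam
  simp only [Submodule.coe_norm, Submodule.coe_add, Submodule.coe_smul] at h
  exact h

end Aux

theorem rightSymmetric_c_czero_cfin (𝕂 : Type*) [RCLike 𝕂] :
    (∀ x : czero 𝕂, RightSym (𝕂 := 𝕂) x → x = 0) ∧
    (∀ x : cfin 𝕂, RightSym (𝕂 := 𝕂) x → x = 0) ∧
    (∀ x : cconv 𝕂, RightSym (𝕂 := 𝕂) x ↔
      ∀ n : ℕ, ‖(x : lp (fun _ : ℕ => 𝕂) ∞) n‖ = ‖x‖) := by
  constructor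
  · -- czero
    intro x hsym
    by_contra hx0
    have hxv : (x : lp (fun _ : ℕ => 𝕂) ∞) ≠ 0 := by
      simpa using hx0
    have hx2 : Tendsto (fun n => (x : lp (fun _ : ℕ => 𝕂) ∞) n) atTop (nhds 0) := x.2
    have hnorm : Tendsto (fun n => ‖(x : lp (fun _ : ℕ => 𝕂) ∞) n‖) atTop (nhds 0) := by
      simpa using hx2.norm
    have hev : ∀ᶠ n in atTop, ‖(x : lp (fun _ : ℕ => 𝕂) ∞) n‖ < ‖x‖ := by
      refine hnorm.eventually_lt_const ?_
      rw [Submodule.coe_norm]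
      exact norm_pos_iff.mpr hxv
    obtain ⟨n₀, hn₀⟩ := hev.exists
    exact not_rightSym_sub cfin_le_czero x n₀ hn₀ hsym
  constructor
  · -- cfin
    intro x hsym
    by_contra hx0
    have hxv : (x : lp (fun _ : ℕ => 𝕂) ∞) ≠ 0 := by
      simpa using hx0
    have hx2 : ∀ᶠ n in atTop, (x : lp (fun _ : ℕ => 𝕂) ∞) n = 0 := x.2
    have hM : 0 < ‖x‖ := by
      rw [Submodule.coe_norm]
      exact norm_pos_iff.mpr hxv
    have hev : ∀ᶠ n in atTop, ‖(x : lp (fun _ : ℕ => 𝕂) ∞) n‖ < ‖x‖ := by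
      filter_upwards [hx2] with n h
      rw [h, norm_zero]
      exact hM
    obtain ⟨n₀, hn₀⟩ := hev.exists
    exact not_rightSym_sub le_rfl x n₀ hn₀ hsym
  · -- cconv
    intro x
    constructor
    · intro hsym n
      by_contra hne
      have hle : ‖(x : lp (fun _ : ℕ => 𝕂) ∞) n‖ ≤ ‖x‖ := by
        rw [Submodule.coe_norm]
        exact lp.norm_apply_le_norm ENNReal.top_ne_zero _ n
      exact not_rightSym_sub (le_trans cfin_le_czero czero_le_cconv) x n
        (lt_of_le_of_ne hle hne) hsym
    · intro hx y hy
      rw [bj_coe] at hy ⊢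
      refine flat_rightSym _ _ (fun n => ?_) hy
      rw [hx n, Submodule.coe_norm]
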